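/- Let (X,T) be a TDS. If there exist two distinct T-invariant ergodic Borel probability measures on X, each with full support, then (X,T) is FK-sensitive. -/

import Mathlib

open Filter Topology MeasureTheory Set

namespace FKPaper

variable {X : Type*} [MetricSpace X]

/-- The maximal fit of an `(n,δ)`-match between the orbits of `x` and `z` under `T`:
the largest cardinality of the domain of an order-preserving bijection
`π : D → R`, with `D, R ⊆ {0,…,n-1}` and `dist (T^[i] x) (T^[π i] z) < δ` for `i ∈ D`. -/
noncomputable def maxFit (T : X → X) (δ : ℝ) (n : ℕ) (x z : X) : ℕ :=
  sSup {k : ℕ | ∃ i j : Fin k → ℕ, StrictMono i ∧ StrictMono j ∧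
    (∀ s, i s < n) ∧ (∀ s, j s < n) ∧ ∀ s, dist (T^[i s] x) (T^[j s] z) < δ}

/-- `f̄_{n,δ}(x,z) = 1 - (maximal fit of an (n,δ)-match of x and z)/n`. -/
noncomputable def fbarN (T : X → X) (δ : ℝ) (n : ℕ) (x z : X) : ℝ :=
  1 - (maxFit T δ n x z : ℝ) / n

/-- `f̄_δ(x,z) = limsup_{n→∞} f̄_{n,δ}(x,z)`. -/
noncomputable def fbar (T : X → X) (δ : ℝ) (x z : X) : ℝ :=
  Filter.limsup (fun n => fbarN T δ n x z) Filter.atTop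

/-- The Feldman–Katok pseudometric `ρ_FK(x,z) = inf {δ > 0 : f̄_δ(x,z) < δ}`. -/
noncomputable def rhoFK (T : X → X) (x z : X) : ℝ :=
  sInf {δ : ℝ | 0 < δ ∧ fbar T δ x z < δ}

/-- FK-sensitivity: some `ε > 0` works for every nonempty open set. -/
def FKSensitive (T : X → X) : Prop :=
  ∃ ε > 0, ∀ U : Set X, IsOpen U → U.Nonempty →
    ∃ x ∈ U, ∃ y ∈ U, ε < rhoFK T x y

end FKPaper

open FKPaper Filter Topology MeasureTheory Set
open scoped NNReal ENNReal

set_option linter.unusedSectionVars false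

namespace FKAux

variable {X : Type*} [MetricSpace X]

/-! ### Birkhoff averages -/

/-- Birkhoff average. -/
noncomputable def avg (T : X → X) (F : X → ℝ) (n : ℕ) (x : X) : ℝ :=
  (∑ i ∈ Finset.range n, F (T^[i] x)) / n

lemma abs_avg_le {T : X → X} {F : X → ℝ} {M : ℝ} (hM : ∀ a, |F a| ≤ M) (hM0 : 0 ≤ M)
    (n : ℕ) (x : X) : |avg T F n x| ≤ M := by
  rcases Nat.eq_zero_or_pos n with rfl | hn
  · simp [avg, hM0]
  · have h1 : |∑ i ∈ Finset.range n, F (T^[i] x)| ≤ n * M := by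
      calc |∑ i ∈ Finset.range n, F (T^[i] x)| ≤ ∑ i ∈ Finset.range n, |F (T^[i] x)| :=
            Finset.abs_sum_le_sum_abs _ _
        _ ≤ ∑ _i ∈ Finset.range n, M := Finset.sum_le_sum fun i _ => hM _
        _ = n * M := by simp [mul_comm]
    have hn' : (0:ℝ) < n := by exact_mod_cast hn
    rw [avg, abs_div, abs_of_pos hn', div_le_iff₀ hn']
    simpa [mul_comm] using h1

lemma avg_comp_sub (T : X → X) (F : X → ℝ) (n : ℕ) (x : X) :
    avg T F n (T x) - avg T F n x = (F (T^[n] x) - F x) / n := by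
  have h : ∑ i ∈ Finset.range n, F (T^[i] (T x))
      = ∑ i ∈ Finset.range n, F (T^[i] x) + (F (T^[n] x) - F x) := by
    have h1 : ∀ i, F (T^[i] (T x)) = F (T^[i+1] x) := by
      intro i; rw [← Function.iterate_succ_apply]
    simp_rw [h1]
    have := Finset.sum_range_succ' (fun i => F (T^[i] x)) n
    have h2 := Finset.sum_range_succ (fun i => F (T^[i] x)) n
    rw [h2] at this
    simp only [Function.iterate_zero, id_eq] at this
    linarith
  rw [avg, avg, h]
  ring

lemma tendsto_avg_comp_sub {T : X → X} {F : X → ℝ} {M : ℝ} (hM : ∀ a, |F a| ≤ M) (x : X) :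
    Tendsto (fun n => avg T F n (T x) - avg T F n x) atTop (𝓝 0) := by
  have hb : ∀ n : ℕ, ‖avg T F n (T x) - avg T F n x‖ ≤ 2 * M / n := by
    intro n
    rw [avg_comp_sub]
    rcases Nat.eq_zero_or_pos n with rfl | hn
    · simp
    · have hn' : (0:ℝ) < n := by exact_mod_cast hn
      rw [Real.norm_eq_abs, abs_div, abs_of_pos hn', div_le_div_iff_of_pos_right hn']
      calc |F (T^[n] x) - F x| ≤ |F (T^[n] x)| + |F x| := abs_sub _ _
        _ ≤ 2 * M := by have := hM (T^[n] x); have := hM x; linarith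
  exact squeeze_zero_norm hb (by simpa using tendsto_const_div_atTop_nhds_zero_nat (2*M))

/-! ### limsup stability -/

lemma limsup_add_le_of_tendsto_zero {u d : ℕ → ℝ}
    (h1 : IsBoundedUnder (· ≥ ·) atTop u) (h2 : IsBoundedUnder (· ≤ ·) atTop u)
    (hd : Tendsto d atTop (𝓝 0)) :
    limsup (fun n => u n + d n) atTop ≤ limsup u atTop := by
  have h := limsup_add_le (f := atTop) (u := u) (v := d) h1 h2
      (hd.isBoundedUnder_ge.isCoboundedUnder_le) hd.isBoundedUnder_le
  have hd0 : limsup d atTop = 0 := hd.limsup_eq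
  rw [hd0, add_zero] at h
  exact h

lemma limsup_add_tendsto_zero {u d : ℕ → ℝ}
    (h1 : IsBoundedUnder (· ≥ ·) atTop u) (h2 : IsBoundedUnder (· ≤ ·) atTop u)
    (hd : Tendsto d atTop (𝓝 0)) :
    limsup (fun n => u n + d n) atTop = limsup u atTop := by
  refine le_antisymm (limsup_add_le_of_tendsto_zero h1 h2 hd) ?_
  have hd' : Tendsto (fun n => -(d n)) atTop (𝓝 0) := by simpa using hd.neg
  have h1' : IsBoundedUnder (· ≥ ·) atTop (fun n => u n + d n) :=
    isBoundedUnder_ge_add h1 hd.isBoundedUnder_ge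
  have h2' : IsBoundedUnder (· ≤ ·) atTop (fun n => u n + d n) :=
    isBoundedUnder_le_add h2 hd.isBoundedUnder_le
  have := limsup_add_le_of_tendsto_zero h1' h2' hd'
  simpa using this

/-! ### maxFit combinatorics -/

lemma fin_card_le {k n : ℕ} {i : Fin k → ℕ} (hi : StrictMono i) (hin : ∀ s, i s < n) :
    k ≤ n := by
  have hsub : Finset.univ.image i ⊆ Finset.range n := by
    intro a ha
    simp only [Finset.mem_image] at ha
    obtain ⟨s, _, rfl⟩ := ha
    exact Finset.mem_range.2 (hin s)
  have := Finset.card_le_card hsub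
  simpa [Finset.card_image_of_injective _ hi.injective] using this

lemma matchSet_zero_mem (T : X → X) (δ : ℝ) (n : ℕ) (x z : X) :
    0 ∈ {k : ℕ | ∃ i j : Fin k → ℕ, StrictMono i ∧ StrictMono j ∧
      (∀ s, i s < n) ∧ (∀ s, j s < n) ∧ ∀ s, dist (T^[i s] x) (T^[j s] z) < δ} :=
  ⟨Fin.elim0, Fin.elim0, fun a => a.elim0, fun a => a.elim0,
    fun a => a.elim0, fun a => a.elim0, fun a => a.elim0⟩

lemma matchSet_bddAbove (T : X → X) (δ : ℝ) (n : ℕ) (x z : X) :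
    BddAbove {k : ℕ | ∃ i j : Fin k → ℕ, StrictMono i ∧ StrictMono j ∧
      (∀ s, i s < n) ∧ (∀ s, j s < n) ∧ ∀ s, dist (T^[i s] x) (T^[j s] z) < δ} := by
  refine ⟨n, fun k hk => ?_⟩
  obtain ⟨i, j, hi, hj, hin, hjn, hd⟩ := hk
  exact fin_card_le hi hin

lemma maxFit_le (T : X → X) (δ : ℝ) (n : ℕ) (x z : X) : maxFit T δ n x z ≤ n :=
  csSup_le ⟨0, matchSet_zero_mem T δ n x z⟩ fun k hk => by
    obtain ⟨i, j, hi, hj, hin, hjn, hd⟩ := hk; exact fin_card_le hi hin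

lemma maxFit_mem (T : X → X) (δ : ℝ) (n : ℕ) (x z : X) :
    ∃ i j : Fin (maxFit T δ n x z) → ℕ, StrictMono i ∧ StrictMono j ∧
      (∀ s, i s < n) ∧ (∀ s, j s < n) ∧
      ∀ s, dist (T^[i s] x) (T^[j s] z) < δ :=
  Nat.sSup_mem ⟨0, matchSet_zero_mem T δ n x z⟩ (matchSet_bddAbove T δ n x z)

lemma maxFit_eq_of_close {T : X → X} {δ : ℝ} {n : ℕ} {x z : X}
    (h : ∀ s < n, dist (T^[s] x) (T^[s] z) < δ) : maxFit T δ n x z = n := by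
  refine le_antisymm (maxFit_le T δ n x z) ?_
  refine le_csSup (matchSet_bddAbove T δ n x z) ?_
  exact ⟨Fin.val, Fin.val, fun a b hab => hab, fun a b hab => hab,
    fun s => s.isLt, fun s => s.isLt, fun s => h s s.isLt⟩

lemma fbarN_le_one (T : X → X) (δ : ℝ) (n : ℕ) (x z : X) : fbarN T δ n x z ≤ 1 := by
  have : (0:ℝ) ≤ (maxFit T δ n x z : ℝ) / n := by positivity
  simp only [fbarN]; linarith

lemma fbar_lt_of_large [CompactSpace X] (T : X → X) (x z : X) {δ : ℝ}
    (hδ : ∀ a b : X, dist a b < δ) (hδ0 : 0 < δ) : fbar T δ x z < δ := by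
  have hev : ∀ᶠ n in atTop, fbarN T δ n x z = 0 := by
    filter_upwards [eventually_ge_atTop 1] with n hn
    have hm : maxFit T δ n x z = n := maxFit_eq_of_close fun s _ => hδ _ _
    have hn' : (n:ℝ) ≠ 0 := by positivity
    simp [fbarN, hm, hn']
  calc fbar T δ x z = limsup (fun _ : ℕ => (0:ℝ)) atTop := limsup_congr hev
    _ = 0 := limsup_const 0
    _ < δ := hδ0

lemma exists_big_delta [CompactSpace X] (T : X → X) (x z : X) :
    {δ : ℝ | 0 < δ ∧ fbar T δ x z < δ}.Nonempty := by
  obtain ⟨C, hC⟩ := Metric.isBounded_iff.1 (isCompact_univ : IsCompact (univ : Set X)).isBounded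
  have hC0 : 0 ≤ C := le_trans (by simp [dist_self]) (hC (mem_univ x) (mem_univ x))
  refine ⟨C + 1, by linarith, fbar_lt_of_large T x z (fun a b => ?_) (by linarith)⟩
  have := hC (mem_univ a) (mem_univ b)
  linarith

lemma exists_delta_of_rhoFK_le [CompactSpace X] {T : X → X} {x z : X} {ε : ℝ}
    (hε : 0 < ε) (h : rhoFK T x z ≤ ε) :
    ∃ δ, 0 < δ ∧ δ < 2 * ε ∧ ∀ᶠ n in atTop, fbarN T δ n x z < δ := by
  have hlt : sInf {δ : ℝ | 0 < δ ∧ fbar T δ x z < δ} < 2 * ε := lt_of_le_of_lt h (by linarith)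
  obtain ⟨δ, hδmem, hδlt⟩ := exists_lt_of_csInf_lt (exists_big_delta T x z) hlt
  refine ⟨δ, hδmem.1, hδlt, ?_⟩
  exact eventually_lt_of_limsup_lt hδmem.2 ⟨1, eventually_map.2 (Eventually.of_forall
    fun n => fbarN_le_one T δ n x z)⟩

/-! ### The matching estimate -/

lemma sum_tail_bound {T : X → X} {F : X → ℝ} {M : ℝ} (hM : ∀ a, |F a| ≤ M)
    {k n : ℕ} {i : Fin k → ℕ} (hi : StrictMono i) (hin : ∀ s, i s < n) (x : X) :
    |∑ s ∈ Finset.range n, F (T^[s] x) - ∑ s : Fin k, F (T^[i s] x)|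
      ≤ ((n : ℝ) - k) * M := by
  classical
  set A : Finset ℕ := Finset.univ.image i with hA
  have hsub : A ⊆ Finset.range n := by
    intro a ha
    simp only [hA, Finset.mem_image] at ha
    obtain ⟨s, _, rfl⟩ := ha
    exact Finset.mem_range.2 (hin s)
  have hAcard : A.card = k := by
    simp [hA, Finset.card_image_of_injective _ hi.injective]
  have hsumA : ∑ s ∈ A, F (T^[s] x) = ∑ s : Fin k, F (T^[i s] x) := by
    rw [hA, Finset.sum_image (fun a _ b _ hab => hi.injective hab)]
  have hsplit : ∑ s ∈ Finset.range n, F (T^[s] x)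
      = ∑ s ∈ Finset.range n \ A, F (T^[s] x) + ∑ s ∈ A, F (T^[s] x) :=
    (Finset.sum_sdiff hsub).symm
  have hkn : k ≤ n := fin_card_le hi hin
  have hcard : (Finset.range n \ A).card = n - k := by
    rw [Finset.card_sdiff_of_subset hsub, Finset.card_range, hAcard]
  have habs : |∑ s ∈ Finset.range n \ A, F (T^[s] x)| ≤ ((n : ℝ) - k) * M := by
    calc |∑ s ∈ Finset.range n \ A, F (T^[s] x)|
        ≤ ∑ s ∈ Finset.range n \ A, |F (T^[s] x)| := Finset.abs_sum_le_sum_abs _ _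
      _ ≤ ∑ _s ∈ Finset.range n \ A, M := Finset.sum_le_sum fun s _ => hM _
      _ = ((n - k : ℕ) : ℝ) * M := by simp [hcard, mul_comm]
      _ = ((n : ℝ) - k) * M := by rw [Nat.cast_sub hkn]
  rw [hsplit, hsumA]
  simpa using habs

lemma abs_avg_sub_avg_le_of_match {T : X → X} {F : X → ℝ} {M ω δ : ℝ}
    (hM : ∀ a, |F a| ≤ M) (hM0 : 0 ≤ M) (hω : 0 ≤ ω) (hδ : 0 ≤ δ)
    {n k : ℕ} (hn : 1 ≤ n) {x z : X}
    (i j : Fin k → ℕ) (hi : StrictMono i) (hj : StrictMono j)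
    (hin : ∀ s, i s < n) (hjn : ∀ s, j s < n)
    (hclose : ∀ s, |F (T^[i s] x) - F (T^[j s] z)| ≤ ω)
    (hk : (n : ℝ) - k ≤ δ * n) :
    |avg T F n x - avg T F n z| ≤ ω + 2 * δ * M := by
  have hkn : k ≤ n := fin_card_le hi hin
  have hn' : (0:ℝ) < n := by exact_mod_cast hn
  have hx := sum_tail_bound hM hi hin (T := T) x
  have hz := sum_tail_bound hM hj hjn (T := T) z
  have hmid : |∑ s : Fin k, F (T^[i s] x) - ∑ s : Fin k, F (T^[j s] z)| ≤ k * ω := by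
    calc |∑ s : Fin k, F (T^[i s] x) - ∑ s : Fin k, F (T^[j s] z)|
        = |∑ s : Fin k, (F (T^[i s] x) - F (T^[j s] z))| := by rw [Finset.sum_sub_distrib]
      _ ≤ ∑ s : Fin k, |F (T^[i s] x) - F (T^[j s] z)| := Finset.abs_sum_le_sum_abs _ _
      _ ≤ ∑ _s : Fin k, ω := Finset.sum_le_sum fun s _ => hclose s
      _ = k * ω := by simp [mul_comm]
  have htot : |∑ s ∈ Finset.range n, F (T^[s] x) - ∑ s ∈ Finset.range n, F (T^[s] z)|
      ≤ k * ω + 2 * (((n : ℝ) - k) * M) := by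
    calc |∑ s ∈ Finset.range n, F (T^[s] x) - ∑ s ∈ Finset.range n, F (T^[s] z)|
        = |(∑ s ∈ Finset.range n, F (T^[s] x) - ∑ s : Fin k, F (T^[i s] x))
            + (∑ s : Fin k, F (T^[i s] x) - ∑ s : Fin k, F (T^[j s] z))
            + (∑ s : Fin k, F (T^[j s] z) - ∑ s ∈ Finset.range n, F (T^[s] z))| := by
          ring_nf
      _ ≤ _ := by
          have h1 := abs_add_le (∑ s ∈ Finset.range n, F (T^[s] x) - ∑ s : Fin k, F (T^[i s] x)
            + (∑ s : Fin k, F (T^[i s] x) - ∑ s : Fin k, F (T^[j s] z)))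
            (∑ s : Fin k, F (T^[j s] z) - ∑ s ∈ Finset.range n, F (T^[s] z))
          have h2 := abs_add_le (∑ s ∈ Finset.range n, F (T^[s] x) - ∑ s : Fin k, F (T^[i s] x))
            (∑ s : Fin k, F (T^[i s] x) - ∑ s : Fin k, F (T^[j s] z))
          have h3 : |∑ s : Fin k, F (T^[j s] z) - ∑ s ∈ Finset.range n, F (T^[s] z)|
              ≤ ((n : ℝ) - k) * M := by rw [abs_sub_comm]; exact hz
          linarith
  have hdiv : |avg T F n x - avg T F n z|
      = |∑ s ∈ Finset.range n, F (T^[s] x) - ∑ s ∈ Finset.range n, F (T^[s] z)| / n := by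
    rw [avg, avg, div_sub_div_same, abs_div, abs_of_pos hn']
  rw [hdiv, div_le_iff₀ hn']
  have hkon : (k : ℝ) ≤ n := by exact_mod_cast hkn
  have h2dM : 2 * (((n : ℝ) - k) * M) ≤ 2 * δ * M * n := by
    have := mul_le_mul_of_nonneg_right hk hM0
    nlinarith
  have hkω : (k : ℝ) * ω ≤ ω * n := by nlinarith
  calc |∑ s ∈ Finset.range n, F (T^[s] x) - ∑ s ∈ Finset.range n, F (T^[s] z)|
      ≤ k * ω + 2 * (((n : ℝ) - k) * M) := htot
    _ ≤ ω * n + 2 * δ * M * n := by linarith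
    _ = (ω + 2 * δ * M) * n := by ring

/-! ### Integration facts -/

lemma integrable_of_abs_le {α : Type*} [MeasurableSpace α] {m : Measure α} [IsFiniteMeasure m]
    {g : α → ℝ} (hg : AEStronglyMeasurable g m) {C : ℝ} (h : ∀ a, |g a| ≤ C) :
    Integrable g m :=
  (memLp_top_of_bound hg C (Eventually.of_forall fun a => by
    simpa [Real.norm_eq_abs] using h a)).integrable le_top

lemma continuous_avg {T : X → X} (hT : Continuous T) {F : X → ℝ} (hF : Continuous F) (n : ℕ) :
    Continuous (avg T F n) := by
  apply Continuous.div_const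
  exact continuous_finset_sum _ fun i _ => hF.comp (hT.iterate i)

lemma exists_abs_bound [CompactSpace X] [Nonempty X] {F : X → ℝ} (hF : Continuous F) :
    ∃ C, 0 ≤ C ∧ ∀ a, |F a| ≤ C := by
  obtain ⟨x₀, -, hx₀⟩ := (isCompact_univ : IsCompact (univ : Set X)).exists_isMaxOn
    univ_nonempty hF.abs.continuousOn
  exact ⟨|F x₀|, abs_nonneg _, fun a => hx₀ (mem_univ a)⟩

lemma integral_avg [MeasurableSpace X] [BorelSpace X] [CompactSpace X] [Nonempty X]
    {T : X → X} (hT : Continuous T) {m : Measure X} [IsProbabilityMeasure m]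
    (hm : MeasurePreserving T m m) {F : X → ℝ} (hF : Continuous F)
    {n : ℕ} (hn : 1 ≤ n) : ∫ x, avg T F n x ∂m = ∫ x, F x ∂m := by
  obtain ⟨C, -, hC⟩ := exists_abs_bound hF
  have hint : ∀ i : ℕ, Integrable (fun x => F (T^[i] x)) m := fun i =>
    integrable_of_abs_le ((hF.comp (hT.iterate i)).aestronglyMeasurable) (fun a => hC _)
  have hcomp : ∀ i : ℕ, ∫ x, F (T^[i] x) ∂m = ∫ x, F x ∂m := by
    intro i
    have hmi : MeasurePreserving (T^[i]) m m := hm.iterate i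
    have h := integral_map (φ := T^[i]) (μ := m) hmi.measurable.aemeasurable
      (f := F) (by rw [hmi.map_eq]; exact hF.aestronglyMeasurable)
    rw [hmi.map_eq] at h
    exact h.symm
  unfold avg
  rw [integral_div, integral_finset_sum _ (fun i _ => hint i)]
  simp_rw [hcomp]
  rw [Finset.sum_const, Finset.card_range, nsmul_eq_mul]
  have hn' : (n:ℝ) ≠ 0 := by positivity
  field_simp

/-! ### The main measure-theoretic step -/

lemma exists_freq_pair [CompactSpace X] [Nonempty X] [MeasurableSpace X] [BorelSpace X]
    {T : X → X} (hT : Continuous T)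
    (μ ν : Measure X) [IsProbabilityMeasure μ] [IsProbabilityMeasure ν]
    (hμ : Ergodic T μ) (hν : Ergodic T ν)
    (hμsupp : ∀ U : Set X, IsOpen U → U.Nonempty → 0 < μ U)
    (hνsupp : ∀ U : Set X, IsOpen U → U.Nonempty → 0 < ν U)
    {F : X → ℝ} (hF : Continuous F) {M : ℝ} (hM : ∀ a, |F a| ≤ M) (hM0 : 0 ≤ M)
    {c₀ : ℝ} (hc₀ : c₀ = ∫ x, F x ∂ν - ∫ x, F x ∂μ) (hc₀pos : 0 < c₀)
    (U : Set X) (hU : IsOpen U) (hUne : U.Nonempty) :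
    ∃ x ∈ U, ∃ y ∈ U, ∃ᶠ n in atTop, c₀ / 2 < avg T F n y - avg T F n x := by
  classical
  set lam : Measure (X × X) := ν.prod μ with hlam
  set V : ℕ → X × X → ℝ := fun n p => avg T F n p.1 - avg T F n p.2 with hV
  have hVcont : ∀ n, Continuous (V n) := fun n =>
    ((continuous_avg hT hF n).comp continuous_fst).sub
      ((continuous_avg hT hF n).comp continuous_snd)
  have hVb : ∀ n p, |V n p| ≤ 2 * M := by
    intro n p
    calc |V n p| ≤ |avg T F n p.1| + |avg T F n p.2| := abs_sub _ _
      _ ≤ 2 * M := by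
          have h1 := abs_avg_le (T := T) hM hM0 n p.1
          have h2 := abs_avg_le (T := T) hM hM0 n p.2
          linarith
  have hbdd : ∀ p, IsBoundedUnder (· ≤ ·) atTop (fun n => V n p) := fun p =>
    ⟨2 * M, eventually_map.2 (Eventually.of_forall fun n => (abs_le.1 (hVb n p)).2)⟩
  have hcob : ∀ p, IsBoundedUnder (· ≥ ·) atTop (fun n => V n p) := fun p =>
    ⟨-(2 * M), eventually_map.2 (Eventually.of_forall fun n => (abs_le.1 (hVb n p)).1)⟩
  set H : X × X → ℝ := fun p => limsup (fun n => V n p) atTop with hH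
  have hHm : Measurable H := Measurable.limsup fun n => (hVcont n).measurable
  have hHb : ∀ p, |H p| ≤ 2 * M := by
    intro p
    rw [abs_le]
    constructor
    · exact le_limsup_of_frequently_le
        ((Eventually.of_forall fun n => (abs_le.1 (hVb n p)).1).frequently) (hbdd p)
    · exact limsup_le_of_le ((hcob p).isCoboundedUnder_le)
        (Eventually.of_forall fun n => (abs_le.1 (hVb n p)).2)
  -- invariance of H in each coordinate
  have hH1 : ∀ p : X × X, H (T p.1, p.2) = H p := by
    intro p
    have hd := tendsto_avg_comp_sub (T := T) hM p.1
    have heq : ∀ n, V n (T p.1, p.2) = V n p + (avg T F n (T p.1) - avg T F n p.1) := by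
      intro n; simp only [hV]; ring
    calc H (T p.1, p.2)
        = limsup (fun n => V n p + (avg T F n (T p.1) - avg T F n p.1)) atTop := by
          simp only [hH]; exact limsup_congr (Eventually.of_forall heq)
      _ = limsup (fun n => V n p) atTop := limsup_add_tendsto_zero (hcob p) (hbdd p) hd
  have hH2 : ∀ p : X × X, H (p.1, T p.2) = H p := by
    intro p
    have hd : Tendsto (fun n => -(avg T F n (T p.2) - avg T F n p.2)) atTop (𝓝 0) := by
      simpa using (tendsto_avg_comp_sub (T := T) hM p.2).neg
    have heq : ∀ n, V n (p.1, T p.2) = V n p + (-(avg T F n (T p.2) - avg T F n p.2)) := by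
      intro n; simp only [hV]; ring
    calc H (p.1, T p.2)
        = limsup (fun n => V n p + (-(avg T F n (T p.2) - avg T F n p.2))) atTop := by
          simp only [hH]; exact limsup_congr (Eventually.of_forall heq)
      _ = limsup (fun n => V n p) atTop := limsup_add_tendsto_zero (hcob p) (hbdd p) hd
  -- the section integrals
  set c : X → ℝ := fun y => ∫ x, H (y, x) ∂μ with hc
  have hHsm : StronglyMeasurable H := hHm.stronglyMeasurable
  have hcm : Measurable c := hHsm.integral_prod_right'.measurable
  have hsec : ∀ y, (fun x => H (y, x)) =ᵐ[μ] fun _ => c y := by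
    intro y
    obtain ⟨cy, hcy⟩ := hμ.ae_eq_const_of_ae_eq_comp₀ (g := fun x => H (y, x))
      ((hHm.comp measurable_prodMk_left).nullMeasurable)
      (Eventually.of_forall fun x => hH2 (y, x))
    have hceq : c y = cy := by
      simp only [hc]
      rw [integral_congr_ae hcy]
      simp
    rw [hceq]
    exact hcy
  have hcT : ∀ y, c (T y) = c y := by
    intro y
    simp only [hc]
    exact integral_congr_ae (Eventually.of_forall fun x => hH1 (y, x))
  obtain ⟨κ, hκ⟩ := hν.ae_eq_const_of_ae_eq_comp₀ hcm.nullMeasurable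
    (Eventually.of_forall hcT)
  -- integrability
  have hHint : Integrable H lam := integrable_of_abs_le hHsm.aestronglyMeasurable hHb
  have hintc : ∫ y, c y ∂ν = κ := by
    rw [integral_congr_ae hκ]; simp
  have hHc : ∫ p, H p ∂lam = ∫ y, c y ∂ν := by
    rw [hlam, integral_prod _ hHint]
  -- the reverse-Fatou lower bound : c₀ ≤ ∫ H
  have hVint : ∀ n, Integrable (V n) lam := fun n =>
    integrable_of_abs_le (hVcont n).aestronglyMeasurable (hVb n)
  have hVval : ∀ n, 1 ≤ n → ∫ p, V n p ∂lam = c₀ := by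
    intro n hn
    have ha : Integrable (fun p : X × X => avg T F n p.1) lam :=
      integrable_of_abs_le (((continuous_avg hT hF n).comp continuous_fst).aestronglyMeasurable)
        (fun p => abs_avg_le hM hM0 n p.1)
    have hb : Integrable (fun p : X × X => avg T F n p.2) lam :=
      integrable_of_abs_le (((continuous_avg hT hF n).comp continuous_snd).aestronglyMeasurable)
        (fun p => abs_avg_le hM hM0 n p.2)
    have h1 : ∫ p, avg T F n p.1 ∂lam = ∫ y, avg T F n y ∂ν := by
      rw [hlam, integral_prod _ ha]
      simp
    have h2 : ∫ p, avg T F n p.2 ∂lam = ∫ x, avg T F n x ∂μ := by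
      rw [hlam, integral_prod _ hb]
      simp
    rw [hV]
    rw [integral_sub ha hb, h1, h2,
      integral_avg hT hν.toMeasurePreserving hF hn,
      integral_avg hT hμ.toMeasurePreserving hF hn, hc₀]
  have hlow : c₀ ≤ ∫ p, H p ∂lam := by
    set W : ℕ → X × X → ℝ := fun n p => V n p + 2 * M with hW
    have hWnn : ∀ n p, 0 ≤ W n p := by
      intro n p; have := (abs_le.1 (hVb n p)).1; simp only [hW]; linarith
    have hWb : ∀ n p, W n p ≤ 4 * M := by
      intro n p; have := (abs_le.1 (hVb n p)).2; simp only [hW]; linarith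
    have hWint : ∀ n, Integrable (W n) lam := fun n => (hVint n).add (integrable_const _)
    have hWval : ∀ n, 1 ≤ n →
        ∫⁻ p, ENNReal.ofReal (W n p) ∂lam = ENNReal.ofReal (c₀ + 2 * M) := by
      intro n hn
      rw [← ofReal_integral_eq_lintegral_ofReal (hWint n)
        (Eventually.of_forall fun p => hWnn n p)]
      congr 1
      simp only [hW]
      rw [integral_add (hVint n) (integrable_const _), hVval n hn]
      simp
    have hrev := limsup_lintegral_le (μ := lam)
      (f := fun n p => ENNReal.ofReal (W n p)) (fun _ => ENNReal.ofReal (4 * M))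
      (fun n => ((hVcont n).add continuous_const).measurable.ennreal_ofReal)
      (fun n => Eventually.of_forall fun p => ENNReal.ofReal_le_ofReal (hWb n p))
      (by simp [lintegral_const, ENNReal.ofReal_ne_top, ENNReal.mul_eq_top])
    have hlhs : limsup (fun n => ∫⁻ p, ENNReal.ofReal (W n p) ∂lam) atTop
        = ENNReal.ofReal (c₀ + 2 * M) := by
      have : ∀ᶠ n in atTop, (∫⁻ p, ENNReal.ofReal (W n p) ∂lam)
          = ENNReal.ofReal (c₀ + 2 * M) := by
        filter_upwards [eventually_ge_atTop 1] with n hn using hWval n hn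
      rw [limsup_congr this, limsup_const]
    have hpt : ∀ p, limsup (fun n => ENNReal.ofReal (W n p)) atTop
        = ENNReal.ofReal (H p + 2 * M) := by
      intro p
      have hWbdd : IsBoundedUnder (· ≤ ·) atTop (fun n => W n p) :=
        isBoundedUnder_le_add (hbdd p) ⟨2 * M, eventually_map.2 (Eventually.of_forall fun _ => le_rfl)⟩
      have hWcob : IsCoboundedUnder (· ≤ ·) atTop (fun n => W n p) :=
        (isBoundedUnder_ge_add (hcob p)
          ⟨2 * M, eventually_map.2 (Eventually.of_forall fun _ => le_rfl)⟩).isCoboundedUnder_le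
      have hlim : limsup (fun n => W n p) atTop = H p + 2 * M := by
        simp only [hW]
        exact limsup_add_const atTop (fun n => V n p) (2 * M) (hbdd p)
          ((hcob p).isCoboundedUnder_le)
      have := Monotone.map_limsup_of_continuousAt (F := atTop)
        (f := ENNReal.ofReal) (fun _ _ h => ENNReal.ofReal_le_ofReal h)
        (fun n => W n p) ENNReal.continuous_ofReal.continuousAt hWbdd hWcob
      rw [← hlim]
      exact this.symm
    have hstep : ENNReal.ofReal (c₀ + 2 * M)
        ≤ ∫⁻ p, ENNReal.ofReal (H p + 2 * M) ∂lam := by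
      rw [← hlhs]
      refine le_trans hrev (le_of_eq ?_)
      exact lintegral_congr fun p => hpt p
    have hHint2 : Integrable (fun p => H p + 2 * M) lam := hHint.add (integrable_const _)
    have hHnn : ∀ p, 0 ≤ H p + 2 * M := by
      intro p; have := (abs_le.1 (hHb p)).1; linarith
    rw [← ofReal_integral_eq_lintegral_ofReal hHint2
      (Eventually.of_forall hHnn)] at hstep
    have hnn2 : 0 ≤ ∫ p, (H p + 2 * M) ∂lam := integral_nonneg hHnn
    have := (ENNReal.ofReal_le_ofReal_iff hnn2).1 hstep
    rw [integral_add hHint (integrable_const _)] at this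
    simp at this
    linarith
  have hκc : c₀ ≤ κ := by rw [← hintc, ← hHc]; exact hlow
  -- a.e. statements
  have hae1 : ∀ᵐ p ∂lam, H p = c p.1 := by
    rw [ae_iff]
    have hms : MeasurableSet {p : X × X | ¬ H p = c p.1} :=
      (measurableSet_eq_fun hHm (hcm.comp measurable_fst)).compl
    rw [hlam, Measure.prod_apply hms]
    have hz : ∀ y, μ (Prod.mk y ⁻¹' {p : X × X | ¬ H p = c p.1}) = 0 := by
      intro y
      have := ae_iff.1 (hsec y)
      exact this
    simp only [hz]
    simp
  have hae2 : ∀ᵐ p ∂lam, c p.1 = κ := by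
    rw [ae_iff]
    have hseteq : {p : X × X | ¬ c p.1 = κ} = {y : X | ¬ c y = κ} ×ˢ (univ : Set X) := by
      ext ⟨y, x⟩; simp [Set.mem_prod]
    rw [hseteq, hlam, Measure.prod_prod]
    have hν0 : ν {y | ¬ c y = κ} = 0 := by
      simpa [Function.const] using ae_iff.1 hκ
    rw [hν0]
    simp
  have hae : ∀ᵐ p ∂lam, c₀ ≤ H p := by
    filter_upwards [hae1, hae2] with p h1 h2
    rw [h1, h2]; exact hκc
  -- find a point in U × U
  have hWpos : 0 < lam (U ×ˢ U) := by
    rw [hlam, Measure.prod_prod]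
    exact ENNReal.mul_pos (hνsupp U hU hUne).ne' (hμsupp U hU hUne).ne'
  have hbad : lam {p : X × X | ¬ c₀ ≤ H p} = 0 := ae_iff.1 hae
  have hexists : ∃ p ∈ U ×ˢ U, c₀ ≤ H p := by
    by_contra hcon
    push_neg at hcon
    have hsub : U ×ˢ U ⊆ {p : X × X | ¬ c₀ ≤ H p} := fun p hp =>
      not_le.mpr (hcon p hp)
    exact absurd (measure_mono_null hsub hbad) (ne_of_gt hWpos)
  obtain ⟨p, hpU, hpH⟩ := hexists
  refine ⟨p.2, hpU.2, p.1, hpU.1, ?_⟩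
  have hfl : c₀ / 2 < limsup (fun n => V n p) atTop := lt_of_lt_of_le (by linarith) hpH
  exact frequently_lt_of_lt_limsup ((hcob p).isCoboundedUnder_le) hfl

end FKAux

open FKAux

/-! ### The core argument -/

lemma fk_core {X : Type*} [MetricSpace X] [CompactSpace X] [Nonempty X]
    {T : X → X} (hT : Continuous T) [MeasurableSpace X] [BorelSpace X]
    (μ ν : Measure X) [IsProbabilityMeasure μ] [IsProbabilityMeasure ν]
    (hμ : Ergodic T μ) (hν : Ergodic T ν)
    (hμsupp : ∀ U : Set X, IsOpen U → U.Nonempty → 0 < μ U)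
    (hνsupp : ∀ U : Set X, IsOpen U → U.Nonempty → 0 < ν U)
    {F : X → ℝ} (hF : Continuous F)
    (hlt : ∫ x, F x ∂μ < ∫ x, F x ∂ν) :
    FKSensitive T := by
  obtain ⟨M₀, hM₀0, hM₀⟩ := exists_abs_bound hF
  set M := M₀ + 1 with hMdef
  have hMpos : 0 < M := by linarith
  have hMb : ∀ a, |F a| ≤ M := fun a => (hM₀ a).trans (by linarith)
  set c₀ := ∫ x, F x ∂ν - ∫ x, F x ∂μ with hc₀def
  have hc₀pos : 0 < c₀ := by rw [hc₀def]; linarith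
  obtain ⟨δ₀, hδ₀pos, hδ₀⟩ := Metric.uniformContinuous_iff.mp
    (CompactSpace.uniformContinuous_of_continuous hF) (c₀ / 8) (by positivity)
  set ε := min (δ₀ / 2) (c₀ / (32 * M)) with hεdef
  have hεpos : 0 < ε := lt_min (by positivity) (by positivity)
  refine ⟨ε, hεpos, fun U hU hUne => ?_⟩
  obtain ⟨x, hx, y, hy, hfreq⟩ := exists_freq_pair hT μ ν hμ hν hμsupp hνsupp hF hMb
    hMpos.le hc₀def hc₀pos U hU hUne
  refine ⟨x, hx, y, hy, ?_⟩
  by_contra hcon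
  push_neg at hcon
  obtain ⟨δ, hδpos, hδlt, hev⟩ := exists_delta_of_rhoFK_le hεpos hcon
  have hεa : ε ≤ δ₀ / 2 := min_le_left _ _
  have hεb : ε ≤ c₀ / (32 * M) := min_le_right _ _
  obtain ⟨n, hgt, hfb, hn1⟩ := (hfreq.and_eventually (hev.and (eventually_ge_atTop 1))).exists
  obtain ⟨hfb, hn1⟩ := And.intro hfb hn1
  obtain ⟨i, j, hi, hj, hin, hjn, hd⟩ := maxFit_mem T δ n x y
  have hn' : (0:ℝ) < n := by exact_mod_cast hn1
  have hkn : (n : ℝ) - (maxFit T δ n x y : ℝ) ≤ δ * n := by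
    have hlt' : 1 - (maxFit T δ n x y : ℝ) / n < δ := hfb
    have := mul_lt_mul_of_pos_left hlt' hn'
    have heq : (n:ℝ) * (1 - (maxFit T δ n x y : ℝ) / n) = n - maxFit T δ n x y := by
      field_simp
    rw [heq] at this
    linarith [this]
  have hδδ₀ : δ < δ₀ := lt_of_lt_of_le hδlt (by linarith)
  have hclose : ∀ s, |F (T^[i s] x) - F (T^[j s] y)| ≤ c₀ / 8 := by
    intro s
    have h1 : dist (T^[i s] x) (T^[j s] y) < δ₀ := lt_trans (hd s) hδδ₀
    have := hδ₀ h1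
    rw [Real.dist_eq] at this
    exact this.le
  have hbound := abs_avg_sub_avg_le_of_match hMb hMpos.le (by positivity) hδpos.le hn1
    i j hi hj hin hjn hclose hkn
  have h2δM : 2 * δ * M ≤ c₀ / 8 := by
    have h32 : (0:ℝ) < 32 * M := by linarith
    have hεc : ε * (32 * M) ≤ c₀ := (le_div_iff₀ h32).1 hεb
    nlinarith [mul_le_mul_of_nonneg_right hδlt.le hMpos.le, hεc]
  have habs : avg T F n y - avg T F n x ≤ |avg T F n x - avg T F n y| := by
    rw [abs_sub_comm]; exact le_abs_self _
  linarith

/-- two distinct fully supported ergodic invariant measures force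
FK-sensitivity. -/
theorem fkSensitive_of_two_fully_supported_ergodic {X : Type*} [MetricSpace X] [CompactSpace X] [Nonempty X]
    (T : X → X) (hT : Continuous T) [MeasurableSpace X] [BorelSpace X]
    (μ ν : Measure X) [IsProbabilityMeasure μ] [IsProbabilityMeasure ν]
    (hμ : Ergodic T μ) (hν : Ergodic T ν)
    (hμsupp : ∀ U : Set X, IsOpen U → U.Nonempty → 0 < μ U)
    (hνsupp : ∀ U : Set X, IsOpen U → U.Nonempty → 0 < ν U)
    (hne : μ ≠ ν) :
    FKSensitive T := by
  have hFex : ∃ F : X → ℝ, Continuous F ∧ ∫ x, F x ∂μ ≠ ∫ x, F x ∂ν := by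
    by_contra h
    push_neg at h
    apply hne
    apply ext_of_forall_lintegral_eq_of_IsFiniteMeasure
    intro f
    have hgc : Continuous fun x => ((f x : ℝ≥0) : ℝ) :=
      NNReal.continuous_coe.comp f.continuous
    obtain ⟨C, -, hC⟩ := exists_abs_bound hgc
    have hgint : ∀ (m : Measure X) [IsProbabilityMeasure m],
        Integrable (fun x => ((f x : ℝ≥0) : ℝ)) m := fun m _ =>
      integrable_of_abs_le hgc.aestronglyMeasurable hC
    have e1 := ofReal_integral_eq_lintegral_ofReal (hgint μ)
      (Eventually.of_forall fun x => (f x).coe_nonneg)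
    have e2 := ofReal_integral_eq_lintegral_ofReal (hgint ν)
      (Eventually.of_forall fun x => (f x).coe_nonneg)
    simp_rw [ENNReal.ofReal_coe_nnreal] at e1 e2
    rw [← e1, ← e2, h _ hgc]
  obtain ⟨F, hF, hFne⟩ := hFex
  rcases lt_or_gt_of_ne hFne with h | h
  · exact fk_core hT μ ν hμ hν hμsupp hνsupp hF h
  · exact fk_core hT ν μ hν hμ hνsupp hμsupp hF h
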